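/- For all x ≥ 0, one has −11/6 + x + 3e^{-x} − (3/2)e^{-2x} + (1/3)e^{-3x} ≤ x·(1 − e^{-x})^3. -/
import Mathlib

noncomputable def Fcalc4 (x : ℝ) : ℝ :=
  11/6 - 3*((x+1)*Real.exp (-x)) + 3*((x+1/2)*Real.exp (-2*x)) - (x+1/3)*Real.exp (-3*x)

lemma Fcalc4_hasDerivAt (x : ℝ) :
    HasDerivAt Fcalc4
      (3*x*Real.exp (-x) - 6*x*Real.exp (-2*x) + 3*x*Real.exp (-3*x)) x := by
  have h1 : HasDerivAt (fun y : ℝ => Real.exp (-y)) (Real.exp (-x) * (-1)) x :=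
    (Real.hasDerivAt_exp (-x)).comp x (hasDerivAt_neg x)
  have h2 : HasDerivAt (fun y : ℝ => Real.exp (-2*y)) (Real.exp (-2*x) * (-2)) x := by
    have := ((hasDerivAt_id x).const_mul (-2 : ℝ)).exp
    simpa using this
  have h3 : HasDerivAt (fun y : ℝ => Real.exp (-3*y)) (Real.exp (-3*x) * (-3)) x := by
    have := ((hasDerivAt_id x).const_mul (-3 : ℝ)).exp
    simpa using this
  have ha : HasDerivAt (fun y : ℝ => y + 1) 1 x := by
    simpa using (hasDerivAt_id x).add_const 1
  have hb : HasDerivAt (fun y : ℝ => y + 1/2) 1 x := by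
    simpa using (hasDerivAt_id x).add_const (1/2)
  have hc : HasDerivAt (fun y : ℝ => y + 1/3) 1 x := by
    simpa using (hasDerivAt_id x).add_const (1/3)
  have t1 := (ha.mul h1).const_mul (3:ℝ)
  have t2 := (hb.mul h2).const_mul (3:ℝ)
  have t3 := hc.mul h3
  have hsum := (((hasDerivAt_const x (11/6 : ℝ)).sub t1).add t2).sub t3
  rw [show (3*x*Real.exp (-x) - 6*x*Real.exp (-2*x) + 3*x*Real.exp (-3*x))
      = (0 - 3 * (1 * Real.exp (-x) + (x+1) * (Real.exp (-x) * (-1)))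
          + 3 * (1 * Real.exp (-2*x) + (x+1/2) * (Real.exp (-2*x) * (-2)))
          - (1 * Real.exp (-3*x) + (x+1/3) * (Real.exp (-3*x) * (-3)))) from by ring]
  exact hsum

lemma Fcalc4_nonneg (x : ℝ) (hx : 0 ≤ x) : 0 ≤ Fcalc4 x := by
  have hdiff : ∀ y, DifferentiableAt ℝ Fcalc4 y := fun y =>
    (Fcalc4_hasDerivAt y).differentiableAt
  have hmono : MonotoneOn Fcalc4 (Set.Ici 0) := by
    apply monotoneOn_of_deriv_nonneg (convex_Ici 0)
      (Differentiable.continuous hdiff).continuousOn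
      (fun y _ => (hdiff y).differentiableWithinAt)
    intro y hy
    rw [interior_Ici] at hy
    rw [(Fcalc4_hasDerivAt y).deriv]
    have hy0 : (0:ℝ) ≤ y := le_of_lt hy
    have e2 : Real.exp (-2*y) = Real.exp (-y) * Real.exp (-y) := by
      rw [show (-2*y) = -y + -y by ring, Real.exp_add]
    have e3 : Real.exp (-3*y) = Real.exp (-y) * Real.exp (-y) * Real.exp (-y) := by
      rw [show (-3*y) = -y + -y + -y by ring, Real.exp_add, Real.exp_add]
    rw [e2, e3]
    have key : 0 ≤ 3 * y * Real.exp (-y) * (1 - Real.exp (-y))^2 :=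
      mul_nonneg (mul_nonneg (by linarith) (Real.exp_pos _).le) (sq_nonneg _)
    nlinarith [key]
  have h0 : Fcalc4 0 = 0 := by
    simp [Fcalc4]
    norm_num
  have := hmono (Set.mem_Ici.mpr le_rfl) (Set.mem_Ici.mpr hx) hx
  linarith [this, h0.ge, h0.le]

theorem calc_ineq_4 (x : ℝ) (hx : 0 ≤ x) :
    -(11 / 6) + x + 3 * Real.exp (-x) - (3 / 2) * Real.exp (-2 * x)
      + (1 / 3) * Real.exp (-3 * x) ≤ x * (1 - Real.exp (-x)) ^ 3 := by
  have hF := Fcalc4_nonneg x hx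
  unfold Fcalc4 at hF
  have e2 : Real.exp (-2*x) = Real.exp (-x) * Real.exp (-x) := by
    rw [show (-2*x) = -x + -x by ring, Real.exp_add]
  have e3 : Real.exp (-3*x) = Real.exp (-x) * Real.exp (-x) * Real.exp (-x) := by
    rw [show (-3*x) = -x + -x + -x by ring, Real.exp_add, Real.exp_add]
  rw [e2, e3] at hF ⊢
  nlinarith [hF]
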